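/- For every k with 1 ≤ k ≤ n−1, in the group algebra K[S_n] one has A'_{n−k}·R_{k,k+1}·R_{k,k+2}⋯R_{k,n} = A'_{n−k}·Π_k = Π_k·A'_{n−k}. -/

import Mathlib

/-!
STATEMENT 1: For 1 ≤ k ≤ n−1, in the group algebra K[S_n],
A'_{n−k}·R_{k,k+1}⋯R_{k,n} = A'_{n−k}·Π_k = Π_k·A'_{n−k}.
The point `i : Fin n` carries the label `i+1 ∈ {1,…,n}`.
-/

noncomputable section

abbrev K : Type := RatFunc ℚ

def u : K := RatFunc.X

variable {n : ℕ}

/-- The transposition (a,b) as an element of the group algebra K[S_n]. -/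
def T (a b : Fin n) : MonoidAlgebra K (Equiv.Perm (Fin n)) :=
  MonoidAlgebra.of K (Equiv.Perm (Fin n)) (Equiv.swap a b)

/-- `Aprime m` = A'_{n−m}: the signed sum of all permutations fixing the
points with labels 1,…,m (i.e. the points `i : Fin n` with `(i:ℕ) < m`). -/
def Aprime (m : ℕ) : MonoidAlgebra K (Equiv.Perm (Fin n)) :=
  ∑ σ ∈ Finset.univ.filter (fun σ : Equiv.Perm (Fin n) => ∀ i : Fin n, (i : ℕ) < m → σ i = i),
    (((Equiv.Perm.sign σ : ℤ) : K)) • MonoidAlgebra.of K (Equiv.Perm (Fin n)) σ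

/-- R_{ij} = 1 − (2u−i−j+2)⁻¹·(i,j), with labels i+1, j+1. -/
def Rga (i j : Fin n) : MonoidAlgebra K (Equiv.Perm (Fin n)) :=
  1 - ((2 * u - ((i : ℕ) + 1 : K) - ((j : ℕ) + 1 : K) + 2)⁻¹ : K) • T i j

/-- Π_k = 1 − (2u−k−n+2)⁻¹·∑_{i=k+1}^n (k,i), with label k+1. -/
def PiGA (k : Fin n) : MonoidAlgebra K (Equiv.Perm (Fin n)) :=
  1 - ((2 * u - ((k : ℕ) + 1 : K) - (n : K) + 2)⁻¹ : K) •
    ∑ i ∈ Finset.univ.filter (fun i => k < i), T k i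

/-- The ordered product R_{k,k+1} R_{k,k+2} ⋯ R_{k,n}. -/
def Rprod (k : Fin n) : MonoidAlgebra K (Equiv.Perm (Fin n)) :=
  (((List.finRange n).filter (fun i => decide (k < i))).map (fun i => Rga k i)).prod

open Finset Equiv MonoidAlgebra

def Phi (n m : ℕ) : Finset (Equiv.Perm (Fin n)) :=
  Finset.univ.filter (fun σ : Equiv.Perm (Fin n) => ∀ i : Fin n, (i : ℕ) < m → σ i = i)

lemma mem_Phi {m : ℕ} {σ : Equiv.Perm (Fin n)} :
    σ ∈ Phi n m ↔ ∀ i : Fin n, (i : ℕ) < m → σ i = i := by simp [Phi]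

def sgnK (σ : Equiv.Perm (Fin n)) : K := ((Equiv.Perm.sign σ : ℤ) : K)

lemma sgnK_mul (σ τ : Equiv.Perm (Fin n)) : sgnK (σ * τ) = sgnK σ * sgnK τ := by
  simp [sgnK]

lemma sgnK_sq (σ : Equiv.Perm (Fin n)) : sgnK σ * sgnK σ = 1 := by
  simp [sgnK, ← Int.cast_mul, Int.units_mul_self]

lemma Aprime_eq (m : ℕ) :
    (Aprime m : MonoidAlgebra K (Equiv.Perm (Fin n))) =
      ∑ σ ∈ Phi n m, sgnK σ • MonoidAlgebra.of K (Equiv.Perm (Fin n)) σ := rfl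

lemma mul_mem_Phi {m : ℕ} {σ τ : Equiv.Perm (Fin n)} (hσ : σ ∈ Phi n m) (hτ : τ ∈ Phi n m) :
    σ * τ ∈ Phi n m := by
  rw [mem_Phi] at *
  intro i hi
  simp [Equiv.Perm.mul_apply, hτ i hi, hσ i hi]

lemma inv_mem_Phi {m : ℕ} {τ : Equiv.Perm (Fin n)} (hτ : τ ∈ Phi n m) : τ⁻¹ ∈ Phi n m := by
  rw [mem_Phi] at *
  intro i hi
  conv_lhs => rw [← hτ i hi]
  simp

lemma Aprime_mul_of {m : ℕ} {τ : Equiv.Perm (Fin n)} (hτ : τ ∈ Phi n m) :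
    (Aprime m : MonoidAlgebra K (Equiv.Perm (Fin n))) * MonoidAlgebra.of K _ τ
      = sgnK τ • Aprime m := by
  rw [Aprime_eq, Finset.sum_mul, Finset.smul_sum]
  refine Finset.sum_bij' (fun σ _ => σ * τ) (fun σ _ => σ * τ⁻¹) ?_ ?_ ?_ ?_ ?_
  · intro a ha; exact mul_mem_Phi ha hτ
  · intro a ha; exact mul_mem_Phi ha (inv_mem_Phi hτ)
  · intro a ha; group
  · intro a ha; group
  · intro a ha
    rw [smul_mul_assoc, ← map_mul, smul_smul, sgnK_mul, mul_comm (sgnK τ),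
      mul_assoc, sgnK_sq, mul_one]

lemma of_mul_Aprime {m : ℕ} {τ : Equiv.Perm (Fin n)} (hτ : τ ∈ Phi n m) :
    MonoidAlgebra.of K _ τ * (Aprime m : MonoidAlgebra K (Equiv.Perm (Fin n)))
      = sgnK τ • Aprime m := by
  rw [Aprime_eq, Finset.mul_sum, Finset.smul_sum]
  refine Finset.sum_bij' (fun σ _ => τ * σ) (fun σ _ => τ⁻¹ * σ) ?_ ?_ ?_ ?_ ?_
  · intro a ha; exact mul_mem_Phi hτ ha
  · intro a ha; exact mul_mem_Phi (inv_mem_Phi hτ) ha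
  · intro a ha; group
  · intro a ha; group
  · intro a ha
    rw [mul_smul_comm, ← map_mul, smul_smul, sgnK_mul,
      show sgnK τ * (sgnK τ * sgnK a) = sgnK τ * sgnK τ * sgnK a from by ring, sgnK_sq, one_mul]

lemma swap_mem_Phi {k a b : Fin n} (ha : (k:ℕ) < (a:ℕ)) (hb : (k:ℕ) < (b:ℕ)) :
    Equiv.swap a b ∈ Phi n ((k:ℕ)+1) := by
  rw [mem_Phi]
  intro i hi
  apply Equiv.swap_apply_of_ne_of_ne
  · exact Fin.ne_of_val_ne (by omega)
  · exact Fin.ne_of_val_ne (by omega)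

lemma k_mem_small (k : Fin n) : ((k:ℕ) : ℕ) < (k:ℕ)+1 := by omega

lemma Aprime_mul_T {k a b : Fin n} (ha : (k:ℕ) < (a:ℕ)) (hb : (k:ℕ) < (b:ℕ)) (hab : a ≠ b) :
    (Aprime ((k:ℕ)+1) : MonoidAlgebra K (Equiv.Perm (Fin n))) * T a b
      = -(Aprime ((k:ℕ)+1)) := by
  have := Aprime_mul_of (swap_mem_Phi ha hb)
  rw [T, this, sgnK, Equiv.Perm.sign_swap hab]
  norm_num

lemma T_mul_T_swap {k a b : Fin n} (hka : a ≠ k) (hkb : b ≠ k) (hab : b ≠ a) :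
    (T k a : MonoidAlgebra K (Equiv.Perm (Fin n))) * T k b = T a b * T k a := by
  unfold T
  rw [← map_mul, ← map_mul]
  congr 1
  rw [Equiv.mul_swap_eq_swap_mul (Equiv.swap k a) k b, Equiv.swap_apply_left,
    Equiv.swap_apply_of_ne_of_ne hkb hab]

lemma field_step (x : K) (hx : x ≠ 0) (hx1 : x - 1 ≠ 0) :
    x⁻¹ + x⁻¹ * (x-1)⁻¹ = (x-1)⁻¹ := by
  field_simp
  ring

lemma nzZ (c : ℤ) : 2 * u - (c : K) ≠ 0 := by
  have h : (2 * u - (c : K)) = algebraMap (Polynomial ℚ) K (2 * Polynomial.X - Polynomial.C (c : ℚ)) := by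
    rw [map_sub, map_mul, map_ofNat]
    rw [show u = algebraMap (Polynomial ℚ) K Polynomial.X from (RatFunc.algebraMap_X (K := ℚ)).symm]
    congr 1
    rw [show Polynomial.C (c:ℚ) = ((c:ℤ) : Polynomial ℚ) from Polynomial.C_eq_intCast c, map_intCast]
  rw [h]
  intro h0
  have h2 := (map_eq_zero_iff _ (IsFractionRing.injective (Polynomial ℚ) K)).mp h0
  have h1 : (2 * Polynomial.X - Polynomial.C (c:ℚ)).coeff 1 = 2 := by
    rw [Polynomial.coeff_sub, Polynomial.coeff_C]
    simp
  rw [h2] at h1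
  norm_num at h1

lemma nz2 (p q : ℕ) : 2 * u - (p : K) - (q : K) ≠ 0 := by
  intro h
  apply nzZ ((p : ℤ) + q)
  push_cast
  linear_combination h

def TN (k : Fin n) (j : ℕ) : MonoidAlgebra K (Equiv.Perm (Fin n)) :=
  if h : j < n then T k ⟨j, h⟩ else 0

def RN (k : Fin n) (j : ℕ) : MonoidAlgebra K (Equiv.Perm (Fin n)) :=
  1 - (2 * u - ((k:ℕ) : K) - (j : K))⁻¹ • TN k j

lemma key (k : Fin n) (d : ℕ) (hd : 1 ≤ d) :
    ∀ _ : (k:ℕ) + d < n,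
    Aprime ((k:ℕ)+1) * ((List.range' ((k:ℕ)+1) d).map (RN k)).prod
      = Aprime ((k:ℕ)+1) * (1 - (2 * u - ((k:ℕ) : K) - (((k:ℕ) + d : ℕ) : K))⁻¹ •
          ∑ j ∈ Finset.Icc ((k:ℕ)+1) ((k:ℕ)+d), TN k j) := by
  induction d, hd using Nat.le_induction with
  | base =>
    intro hdn
    simp [Finset.Icc_self, RN]
  | succ d hd ih =>
    intro hdn
    have hdn' : (k:ℕ) + d < n := by omega
    have hkd1n : (k:ℕ) + d + 1 < n := by omega
    simp only [← Nat.add_assoc]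
    have hsplit : ((List.range' ((k:ℕ)+1) (d+1)).map (RN k)).prod
        = ((List.range' ((k:ℕ)+1) d).map (RN k)).prod * RN k ((k:ℕ)+d+1) := by
      rw [← List.range'_append_1 (s := (k:ℕ)+1) (m := d) (n := 1),
        List.map_append, List.prod_append]
      congr 1
      simp [List.range'_succ]
      congr 1
      omega
    rw [hsplit, ← mul_assoc, ih hdn', mul_assoc]
    -- abbreviations
    have hx : 2 * u - (((k:ℕ):ℕ) : K) - (((k:ℕ)+d : ℕ) : K) ≠ 0 := nz2 _ _
    have key2 : (2 * u - (((k:ℕ):ℕ) : K) - (((k:ℕ)+d : ℕ) : K)) - 1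
        = 2 * u - (((k:ℕ):ℕ) : K) - (((k:ℕ)+d+1 : ℕ) : K) := by push_cast; ring
    have hx1 : (2 * u - (((k:ℕ):ℕ) : K) - (((k:ℕ)+d : ℕ) : K)) - 1 ≠ 0 := by
      rw [key2]; exact nz2 _ _
    set a : K := (2 * u - (((k:ℕ):ℕ) : K) - (((k:ℕ)+d : ℕ) : K))⁻¹ with ha
    set b : K := (2 * u - (((k:ℕ):ℕ) : K) - (((k:ℕ)+d+1 : ℕ) : K))⁻¹ with hb
    have hab : a + a * b = b := by
      rw [ha, hb, ← key2]
      exact field_step _ hx hx1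
    set A' := (Aprime ((k:ℕ)+1) : MonoidAlgebra K (Equiv.Perm (Fin n))) with hA'
    set S := ∑ j ∈ Finset.Icc ((k:ℕ)+1) ((k:ℕ)+d), (TN k j : MonoidAlgebra K (Equiv.Perm (Fin n))) with hS
    set t := (TN k ((k:ℕ)+d+1) : MonoidAlgebra K (Equiv.Perm (Fin n))) with hT
    have hRN : RN k ((k:ℕ)+d+1) = 1 - b • t := rfl
    have hterm : ∀ j ∈ Finset.Icc ((k:ℕ)+1) ((k:ℕ)+d),
        A' * (TN k j * t) = -(A' * TN k j) := by
      intro j hj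
      rw [Finset.mem_Icc] at hj
      have hjn : j < n := by omega
      rw [hT, show (TN k j : MonoidAlgebra K (Equiv.Perm (Fin n))) = T k ⟨j, hjn⟩ from dif_pos hjn,
        show (TN k ((k:ℕ)+d+1) : MonoidAlgebra K (Equiv.Perm (Fin n))) = T k ⟨(k:ℕ)+d+1, hkd1n⟩ from dif_pos hkd1n]
      rw [T_mul_T_swap (Fin.ne_of_val_ne (show j ≠ (k:ℕ) by omega))
        (Fin.ne_of_val_ne (show (k:ℕ)+d+1 ≠ (k:ℕ) by omega))
        (Fin.ne_of_val_ne (show (k:ℕ)+d+1 ≠ j by omega)), ← mul_assoc,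
        Aprime_mul_T (show (k:ℕ) < j by omega) (show (k:ℕ) < (k:ℕ)+d+1 by omega)
          (Fin.ne_of_val_ne (show j ≠ (k:ℕ)+d+1 by omega)), neg_mul]
    have hSt : A' * (S * t) = -(A' * S) := by
      rw [hS, Finset.sum_mul, Finset.mul_sum, Finset.mul_sum]
      rw [Finset.sum_congr rfl hterm]
      simp
    have e1 : ((1 : MonoidAlgebra K (Equiv.Perm (Fin n))) - a • S) * (1 - b • t)
        = 1 - a • S - b • t + (a*b) • (S * t) := by
      simp only [sub_mul, mul_sub, one_mul, mul_one, smul_mul_smul_comm]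
      abel
    rw [hRN, e1, Finset.sum_Icc_succ_top (by omega : (k:ℕ)+1 ≤ (k:ℕ)+d+1), ← hS, ← hT,
      smul_add]
    simp only [mul_sub, mul_add, mul_one, mul_smul_comm]
    rw [hSt, smul_neg]
    have h2 : a • (A' * S) + (a*b) • (A' * S) = b • (A' * S) := by rw [← add_smul, hab]
    calc A' - a • (A' * S) - b • (A' * t) + -((a * b) • (A' * S))
        = A' - (a • (A' * S) + (a*b) • (A' * S)) - b • (A' * t) := by abel
      _ = A' - b • (A' * S) - b • (A' * t) := by rw [h2]
      _ = A' - (b • (A' * S) + b • (A' * t)) := by abel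

lemma comm_lemma (k : Fin n) :
    (Aprime ((k:ℕ)+1) : MonoidAlgebra K (Equiv.Perm (Fin n))) *
        (∑ i ∈ Finset.univ.filter (fun i => k < i), T k i)
      = (∑ i ∈ Finset.univ.filter (fun i => k < i), T k i) * Aprime ((k:ℕ)+1) := by
  have e1 : (Aprime ((k:ℕ)+1) : MonoidAlgebra K (Equiv.Perm (Fin n))) *
      (∑ i ∈ Finset.univ.filter (fun i => k < i), T k i)
      = ∑ σ ∈ Phi n ((k:ℕ)+1), ∑ i ∈ Finset.univ.filter (fun i => k < i),
          sgnK σ • MonoidAlgebra.of K _ (σ * Equiv.swap k i) := by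
    rw [Aprime_eq, Finset.sum_mul]
    refine Finset.sum_congr rfl fun σ _ => ?_
    rw [Finset.mul_sum]
    refine Finset.sum_congr rfl fun i _ => ?_
    rw [T, smul_mul_assoc, ← map_mul]
  have e2 : (∑ i ∈ Finset.univ.filter (fun i => k < i), T k i) *
      (Aprime ((k:ℕ)+1) : MonoidAlgebra K (Equiv.Perm (Fin n)))
      = ∑ σ ∈ Phi n ((k:ℕ)+1), ∑ i ∈ Finset.univ.filter (fun i => k < i),
          sgnK σ • MonoidAlgebra.of K _ (Equiv.swap k i * σ) := by
    rw [Aprime_eq, Finset.mul_sum]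
    refine Finset.sum_congr rfl fun σ _ => ?_
    rw [Finset.sum_mul]
    refine Finset.sum_congr rfl fun i _ => ?_
    rw [T, mul_smul_comm, ← map_mul]
  rw [e1, e2]
  refine Finset.sum_congr rfl fun σ hσ => ?_
  have hfix : ∀ i : Fin n, (i:ℕ) < (k:ℕ)+1 → σ i = i := mem_Phi.mp hσ
  have hσk : σ k = k := hfix k (by omega)
  have hmem : ∀ i : Fin n, k < i → k < σ i := by
    intro i hi
    by_contra h'
    have h1 : ((σ i : Fin n) : ℕ) < (k:ℕ)+1 := by
      rw [Fin.lt_def] at h'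
      omega
    have h2 : σ (σ i) = σ i := hfix _ h1
    have h3 : σ i = i := σ.injective h2
    rw [h3] at h'
    exact h' hi
  refine Finset.sum_bij' (fun i _ => σ i) (fun i _ => σ⁻¹ i) ?_ ?_ ?_ ?_ ?_
  · intro i hi
    simp only [Finset.mem_filter, Finset.mem_univ, true_and] at hi ⊢
    exact hmem i hi
  · intro i hi
    simp only [Finset.mem_filter, Finset.mem_univ, true_and] at hi ⊢
    by_contra h'
    have h1 : ((σ⁻¹ i : Fin n) : ℕ) < (k:ℕ)+1 := by
      rw [Fin.lt_def] at h'
      omega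
    have h2 : σ (σ⁻¹ i) = σ⁻¹ i := hfix _ h1
    rw [show σ (σ⁻¹ i) = i from σ.apply_symm_apply i] at h2
    exact h' (h2 ▸ hi)
  · intro i _
    exact σ.symm_apply_apply i
  · intro i _
    exact σ.apply_symm_apply i
  · intro i _
    congr 1
    rw [Equiv.mul_swap_eq_swap_mul, hσk]

lemma range_filter_lt (m : ℕ) : ∀ N : ℕ,
    (List.range N).filter (fun j => decide (m < j)) = List.range' (m+1) (N - (m+1)) := by
  intro N
  induction N with
  | zero => simp
  | succ N ih =>
    rw [List.range_succ, List.filter_append, ih]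
    by_cases h : m < N
    · have e2 : List.filter (fun j => decide (m < j)) [N] = [N] := by
        simp [List.filter, h]
      have e : List.range' ((m+1)+(N-(m+1))) 1 = [N] := by
        rw [show (m+1)+(N-(m+1)) = N from by omega]
        simp [List.range'_succ]
      rw [e2, ← e, List.range'_append_1, show (N-(m+1)) + 1 = N+1-(m+1) from by omega]
    · have e2 : List.filter (fun j => decide (m < j)) [N] = [] := by
        simp [List.filter, h]
      rw [e2, List.append_nil, show N+1-(m+1) = N-(m+1) from by omega]

lemma Rprod_eq (k : Fin n) :
    Rprod k = ((List.range' ((k:ℕ)+1) (n-1-(k:ℕ))).map (RN k)).prod := by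
  unfold Rprod
  have hfun : (fun i : Fin n => Rga k i) = (RN k) ∘ Fin.val := by
    funext i
    simp only [Function.comp]
    unfold Rga RN TN
    rw [dif_pos i.isLt]
    simp only [Fin.eta]
    rw [show (2 * u - ((k:ℕ)+1 : K) - ((i:ℕ)+1:K) + 2) = 2*u - ((k:ℕ):K) - ((i:ℕ):K) from by
      push_cast; ring]
  have hpred : (fun i : Fin n => decide (k < i)) = (fun j : ℕ => decide ((k:ℕ) < j)) ∘ Fin.val := by
    funext i
    exact decide_eq_decide.mpr Fin.lt_def
  rw [hfun, hpred, ← List.map_map, ← List.filter_map, show List.map Fin.val (List.finRange n) = List.range n from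
      List.ext_getElem (by simp) (by simp), range_filter_lt,
    show n - ((k:ℕ)+1) = n - 1 - (k:ℕ) from by omega]

lemma PiGA_eq (k : Fin n) (hk : (k:ℕ)+1 ≤ n-1) :
    PiGA k = 1 - (2 * u - ((k:ℕ) : K) - ((n-1 : ℕ) : K))⁻¹ •
      ∑ j ∈ Finset.Icc ((k:ℕ)+1) (n-1), TN k j := by
  unfold PiGA
  have hc : (2 * u - ((k:ℕ)+1 : K) - (n : K) + 2)⁻¹
      = (2 * u - ((k:ℕ) : K) - ((n-1 : ℕ) : K))⁻¹ := by
    congr 1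
    rw [Nat.cast_sub (show 1 ≤ n by omega)]
    push_cast
    ring
  have hsum : (∑ i ∈ Finset.univ.filter (fun i => k < i), T k i
        : MonoidAlgebra K (Equiv.Perm (Fin n)))
      = ∑ j ∈ Finset.Icc ((k:ℕ)+1) (n-1), TN k j := by
    refine Finset.sum_bij' (fun (i : Fin n) _ => (i:ℕ))
      (fun j hj => (⟨j, by rw [Finset.mem_Icc] at hj; omega⟩ : Fin n)) ?_ ?_ ?_ ?_ ?_
    · intro i hi
      simp only [Finset.mem_filter, Finset.mem_univ, true_and, Fin.lt_def] at hi
      have := i.isLt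
      show (i:ℕ) ∈ Finset.Icc ((k:ℕ)+1) (n-1)
      rw [Finset.mem_Icc]
      omega
    · intro j hj
      rw [Finset.mem_Icc] at hj
      simp only [Finset.mem_filter, Finset.mem_univ, true_and, Fin.lt_def]
      show (k:ℕ) < j
      omega
    · intro i _
      simp
    · intro j _
      simp
    · intro i _
      simp [TN, i.isLt]
  rw [hc, hsum]

theorem aprime_Rprod_eq_aprime_Pi (k : Fin n) (hk : (k : ℕ) + 1 ≤ n - 1) :
    Aprime ((k : ℕ) + 1) * Rprod k = Aprime ((k : ℕ) + 1) * PiGA k ∧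
    Aprime ((k : ℕ) + 1) * PiGA k = PiGA k * Aprime ((k : ℕ) + 1) := by
  have hkn := k.isLt
  have h1 : (k:ℕ) + (n-1-(k:ℕ)) < n := by omega
  have hd : 1 ≤ n-1-(k:ℕ) := by omega
  have hnat : (k:ℕ) + (n-1-(k:ℕ)) = n-1 := by omega
  constructor
  · have hkey := key k (n-1-(k:ℕ)) hd h1
    rw [hnat] at hkey
    rw [Rprod_eq, hkey, PiGA_eq k hk]
  · rw [PiGA, mul_sub, sub_mul, mul_one, one_mul, mul_smul_comm, smul_mul_assoc, comm_lemma]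

end
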